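/- Every intersection (pullback of two monomorphisms) in the category of K-vector spaces is preserved by every functor from K-vector spaces to any category. -/

import Mathlib

open CategoryTheory Limits

universe u v w

/-- A commuting square equipped with splitting data is a pullback in any category. -/
theorem absPullbackAux {C : Type*} [Category C] {A B B' P : C}
    (m : B ⟶ A) (m' : B' ⟶ A) (fst : P ⟶ B) (snd : P ⟶ B')
    (comm : fst ≫ m = snd ≫ m')
    (r : A ⟶ B) (r' : A ⟶ B') (wm : A ⟶ P)
    (h1 : m ≫ r = 𝟙 B) (h1' : m' ≫ r' = 𝟙 B')
    (h4 : fst ≫ m ≫ wm = 𝟙 P)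
    (h2 : wm ≫ snd = r ≫ m ≫ r')
    (h3 : wm ≫ fst = r' ≫ m' ≫ r) :
    IsPullback fst snd m m' := by
  refine ⟨⟨comm⟩, ⟨PullbackCone.IsLimit.mk comm (fun s => s.fst ≫ m ≫ wm) ?_ ?_ ?_⟩⟩
  · intro s
    have c := s.condition
    calc (s.fst ≫ m ≫ wm) ≫ fst = s.fst ≫ m ≫ (wm ≫ fst) := by simp
    _ = s.fst ≫ m ≫ r' ≫ m' ≫ r := by rw [h3]
    _ = (s.fst ≫ m) ≫ r' ≫ m' ≫ r := by simp
    _ = (s.snd ≫ m') ≫ r' ≫ m' ≫ r := by rw [c]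
    _ = s.snd ≫ (m' ≫ r') ≫ m' ≫ r := by simp
    _ = s.snd ≫ m' ≫ r := by rw [h1']; simp
    _ = (s.snd ≫ m') ≫ r := by simp
    _ = (s.fst ≫ m) ≫ r := by rw [c]
    _ = s.fst ≫ (m ≫ r) := by simp
    _ = s.fst := by rw [h1]; simp
  · intro s
    have c := s.condition
    calc (s.fst ≫ m ≫ wm) ≫ snd = s.fst ≫ m ≫ (wm ≫ snd) := by simp
    _ = s.fst ≫ m ≫ r ≫ m ≫ r' := by rw [h2]
    _ = s.fst ≫ (m ≫ r) ≫ m ≫ r' := by simp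
    _ = s.fst ≫ m ≫ r' := by rw [h1]; simp
    _ = (s.snd ≫ m') ≫ r' := by rw [← c]; simp
    _ = s.snd ≫ (m' ≫ r') := by simp
    _ = s.snd := by rw [h1']; simp
  · intro s l hl _
    calc l = l ≫ 𝟙 P := by simp
    _ = l ≫ fst ≫ m ≫ wm := by rw [← h4]
    _ = (l ≫ fst) ≫ m ≫ wm := by simp
    _ = s.fst ≫ m ≫ wm := by rw [hl]

/-- A complement of `T` relative to an ambient subspace `S`. -/
theorem exists_compl_le {K V : Type*} [Field K] [AddCommGroup V] [Module K V]
    (S T : Submodule K V) (h : T ≤ S) :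
    ∃ C : Submodule K V, C ≤ S ∧ Disjoint T C ∧ T ⊔ C = S := by
  obtain ⟨C₀, hC₀⟩ := Submodule.exists_isCompl (T.comap S.subtype)
  refine ⟨C₀.map S.subtype, Submodule.map_subtype_le _ _, ?_, ?_⟩
  · rw [Submodule.disjoint_def]
    intro x hxT hxC
    obtain ⟨y, hy, rfl⟩ := hxC
    have hyT : y ∈ T.comap S.subtype := hxT
    have := Submodule.disjoint_def.mp hC₀.disjoint y hyT hy
    simp [this]
  · have h1 : Submodule.map S.subtype (T.comap S.subtype) = T := by
      rw [Submodule.map_comap_subtype, inf_eq_right.mpr h]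
    have h2 : T.comap S.subtype ⊔ C₀ = ⊤ := codisjoint_iff.mp hC₀.codisjoint
    calc T ⊔ C₀.map S.subtype
        = Submodule.map S.subtype (T.comap S.subtype) ⊔ C₀.map S.subtype := by rw [h1]
      _ = Submodule.map S.subtype (T.comap S.subtype ⊔ C₀) := (Submodule.map_sup _ _ _).symm
      _ = Submodule.map S.subtype ⊤ := by rw [h2]
      _ = S := by rw [Submodule.map_top, Submodule.range_subtype]

/-- A retraction of an injective map compatible with a projection onto its range. -/
theorem retraction_aux {K V W : Type*} [Field K] [AddCommGroup V] [Module K V]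
    [AddCommGroup W] [Module K W] (f : W →ₗ[K] V) (hf : Function.Injective f)
    (q : Submodule K V) (h : IsCompl (LinearMap.range f) q) :
    ∃ r : V →ₗ[K] W,
      (∀ a : V, f (r a) = Submodule.projectionOnto _ q h a) ∧ ∀ b : W, r (f b) = b := by
  let e := LinearEquiv.ofInjective f hf
  refine ⟨e.symm.toLinearMap ∘ₗ Submodule.projectionOnto _ q h, fun a => ?_, fun b => ?_⟩
  · simp [e]
  · have h1 : Submodule.projectionOnto _ q h (f b) = e b := by
      have : f b = ((e b : LinearMap.range f) : V) := rfl
      rw [this, Submodule.linearProjOfIsCompl_apply_left]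
    simp [h1, e]

theorem stmt12 {K : Type u} [Field K]
    {A B B' P : ModuleCat.{u} K} (m : B ⟶ A) (m' : B' ⟶ A)
    [Mono m] [Mono m'] (fst : P ⟶ B) (snd : P ⟶ B')
    (hpb : IsPullback fst snd m m')
    {D : Type v} [Category.{w} D] (F : ModuleCat.{u} K ⥤ D) :
    IsPullback (F.map fst) (F.map snd) (F.map m) (F.map m') := by
  have hm : Function.Injective m := (ModuleCat.mono_iff_injective m).mp inferInstance
  have hm' : Function.Injective m' := (ModuleCat.mono_iff_injective m').mp inferInstance
  have comm : fst ≫ m = snd ≫ m' := hpb.w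
  set k : P ⟶ A := fst ≫ m with hk_def
  have hk_eq : ∀ p : P, m (fst p) = m' (snd p) := fun p => by
    have := ConcreteCategory.congr_hom comm p
    exact this
  have hkap : ∀ p : P, k p = m (fst p) := fun p => rfl
  -- injectivity of k
  have hk : Function.Injective k := by
    have hz : ∀ p : P, k p = 0 → p = 0 := by
      intro p hp
      have h1 : fst p = 0 := hm (by rw [← hkap p, hp, map_zero])
      have h2 : snd p = 0 := hm' (by rw [← hk_eq p, ← hkap p, hp, map_zero])
      have hx : ModuleCat.ofHom (LinearMap.toSpanSingleton K P p) = (0 : ModuleCat.of K K ⟶ P) := by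
        refine hpb.hom_ext (k := ModuleCat.ofHom (LinearMap.toSpanSingleton K P p))
          (l := (0 : ModuleCat.of K K ⟶ P)) ?_ ?_
        · apply ModuleCat.hom_ext; apply LinearMap.ext; intro x
          show fst (x • p) = fst ((0 : ModuleCat.of K K ⟶ P) x)
          rw [show (0 : ModuleCat.of K K ⟶ P) x = 0 from rfl, map_zero, map_smul, h1, smul_zero]
        · apply ModuleCat.hom_ext; apply LinearMap.ext; intro x
          show snd (x • p) = snd ((0 : ModuleCat.of K K ⟶ P) x)
          rw [show (0 : ModuleCat.of K K ⟶ P) x = 0 from rfl, map_zero, map_smul, h2, smul_zero]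
      have := ConcreteCategory.congr_hom hx (1 : K)
      simpa using this
    intro p q hpq
    have : p - q = 0 := hz _ (by rw [map_sub, hpq, sub_self])
    exact sub_eq_zero.mp this
  -- submodules
  set S : Submodule K A := LinearMap.range m.hom with hS_def
  set S' : Submodule K A := LinearMap.range m'.hom with hS'_def
  set T : Submodule K A := LinearMap.range k.hom with hT_def
  have hTS : T ≤ S := by
    rintro x ⟨p, rfl⟩; exact ⟨fst p, rfl⟩
  have hTS' : T ≤ S' := by
    rintro x ⟨p, rfl⟩; exact ⟨snd p, (hk_eq p).symm⟩
  have hSS'T : S ⊓ S' ≤ T := by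
    rintro a ⟨⟨b, hb⟩, ⟨b', hb'⟩⟩
    let f : ModuleCat.of K K ⟶ B := ModuleCat.ofHom (LinearMap.toSpanSingleton K B b)
    let g : ModuleCat.of K K ⟶ B' := ModuleCat.ofHom (LinearMap.toSpanSingleton K B' b')
    have hfg : f ≫ m = g ≫ m' := by
      apply ModuleCat.hom_ext; apply LinearMap.ext; intro x
      show m (x • b) = m' (x • b')
      rw [map_smul, map_smul, hb, hb']
    refine ⟨hpb.lift f g hfg (1 : K), ?_⟩
    have h0 : fst (hpb.lift f g hfg (1 : K)) = f (1 : K) :=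
      ConcreteCategory.congr_hom (hpb.lift_fst f g hfg) (1 : K)
    have hf1 : f (1 : K) = b := by
      show (1 : K) • b = b
      simp
    rw [hkap, h0, hf1, hb]
  -- complements
  obtain ⟨C, hCS, hTC, hTCsup⟩ := exists_compl_le S T hTS
  obtain ⟨C', hC'S', hTC', hTC'sup⟩ := exists_compl_le S' T hTS'
  obtain ⟨E, hE⟩ := Submodule.exists_isCompl (S ⊔ S')
  -- IsCompl facts
  have hdisjE : ∀ x : A, x ∈ S ⊔ S' → x ∈ E → x = 0 := fun x h1 h2 =>
    Submodule.disjoint_def.mp hE.disjoint x h1 h2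
  have hcS : IsCompl S (C' ⊔ E) := by
    constructor
    · rw [Submodule.disjoint_def]
      intro x hxS hx
      obtain ⟨c', hc', e, he, rfl⟩ := Submodule.mem_sup.mp hx
      have heq : e = 0 := by
        have h1 : e ∈ S ⊔ S' := by
          have : e = (c' + e) - c' := by abel
          rw [this]
          exact Submodule.sub_mem _ (Submodule.mem_sup_left hxS)
            (Submodule.mem_sup_right (hC'S' hc'))
        exact hdisjE e h1 he
      subst heq
      rw [add_zero]
      have hc'T : c' ∈ T := hSS'T ⟨by rwa [add_zero] at hxS, hC'S' hc'⟩
      have := Submodule.disjoint_def.mp hTC' c' hc'T hc'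
      rw [this]
    · rw [codisjoint_iff, eq_top_iff]
      have h1 : S' ≤ S ⊔ C' := by
        rw [← hTC'sup]
        exact sup_le (le_trans hTS le_sup_left) le_sup_right
      have h2 : (⊤ : Submodule K A) = (S ⊔ S') ⊔ E := (codisjoint_iff.mp hE.codisjoint).symm
      rw [h2]
      refine sup_le (sup_le ?_ ?_) ?_
      · exact le_sup_left
      · exact le_trans h1 (sup_le le_sup_left (le_trans le_sup_left le_sup_right))
      · exact le_trans le_sup_right le_sup_right
  have hcS' : IsCompl S' (C ⊔ E) := by
    constructor
    · rw [Submodule.disjoint_def]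
      intro x hxS' hx
      obtain ⟨c, hc, e, he, rfl⟩ := Submodule.mem_sup.mp hx
      have heq : e = 0 := by
        have h1 : e ∈ S ⊔ S' := by
          have : e = (c + e) - c := by abel
          rw [this]
          exact Submodule.sub_mem _ (Submodule.mem_sup_right hxS')
            (Submodule.mem_sup_left (hCS hc))
        exact hdisjE e h1 he
      subst heq
      rw [add_zero]
      have hcT : c ∈ T := hSS'T ⟨hCS hc, by rwa [add_zero] at hxS'⟩
      have := Submodule.disjoint_def.mp hTC c hcT hc
      rw [this]
    · rw [codisjoint_iff, eq_top_iff]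
      have h1 : S ≤ S' ⊔ C := by
        rw [← hTCsup]
        exact sup_le (le_trans hTS' le_sup_left) le_sup_right
      have h2 : (⊤ : Submodule K A) = (S ⊔ S') ⊔ E := (codisjoint_iff.mp hE.codisjoint).symm
      rw [h2]
      refine sup_le (sup_le ?_ ?_) ?_
      · exact le_trans h1 (sup_le le_sup_left (le_trans le_sup_left le_sup_right))
      · exact le_sup_left
      · exact le_trans le_sup_right le_sup_right
  have hcT : IsCompl T (C ⊔ (C' ⊔ E)) := by
    constructor
    · rw [Submodule.disjoint_def]
      intro x hxT hx
      obtain ⟨c, hc, y, hy, rfl⟩ := Submodule.mem_sup.mp hx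
      obtain ⟨c', hc', e, he, rfl⟩ := Submodule.mem_sup.mp hy
      have heq : e = 0 := by
        have h1 : e ∈ S ⊔ S' := by
          have : e = (c + (c' + e)) - c - c' := by abel
          rw [this]
          exact Submodule.sub_mem _ (Submodule.sub_mem _
            (Submodule.mem_sup_left (hTS hxT)) (Submodule.mem_sup_left (hCS hc)))
            (Submodule.mem_sup_right (hC'S' hc'))
        exact hdisjE e h1 he
      subst heq
      rw [add_zero] at hxT ⊢
      have hc'eq : c' = 0 := by
        have h1 : c' ∈ S := by
          have : c' = (c + c') - c := by abel
          rw [this]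
          exact Submodule.sub_mem _ (hTS hxT) (hCS hc)
        have h2 : c' ∈ T := hSS'T ⟨h1, hC'S' hc'⟩
        exact Submodule.disjoint_def.mp hTC' c' h2 hc'
      subst hc'eq
      rw [add_zero] at hxT ⊢
      exact Submodule.disjoint_def.mp hTC c hxT hc
    · rw [codisjoint_iff, eq_top_iff]
      have h1 : (⊤ : Submodule K A) = S ⊔ (C' ⊔ E) := (codisjoint_iff.mp hcS.codisjoint).symm
      rw [h1, ← hTCsup]
      rw [sup_assoc]
  -- projections
  set pS := Submodule.projectionOnto S (C' ⊔ E) hcS with hpS_def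
  set pS' := Submodule.projectionOnto S' (C ⊔ E) hcS' with hpS'_def
  set pT := Submodule.projectionOnto T (C ⊔ (C' ⊔ E)) hcT with hpT_def
  -- retractions
  obtain ⟨r, hr1, hr2⟩ := retraction_aux m.hom hm (C' ⊔ E) hcS
  obtain ⟨r', hr'1, hr'2⟩ := retraction_aux m'.hom hm' (C ⊔ E) hcS'
  obtain ⟨wmap, hw1, hw2⟩ := retraction_aux k.hom hk (C ⊔ (C' ⊔ E)) hcT
  -- key pointwise identities
  have claim : ∀ a : A, ((pS' ((pS a : A)) : A) = (pT a : A)) ∧ ((pS ((pS' a : A)) : A) = (pT a : A)) := by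
    intro a
    have hmem : a ∈ T ⊔ (C ⊔ (C' ⊔ E)) := by
      rw [codisjoint_iff.mp hcT.codisjoint]; trivial
    obtain ⟨t, ht, y, hy, rfl⟩ := Submodule.mem_sup.mp hmem
    obtain ⟨c, hc, z, hz, rfl⟩ := Submodule.mem_sup.mp hy
    obtain ⟨c', hc', e, he, rfl⟩ := Submodule.mem_sup.mp hz
    have hpTa : (pT (t + (c + (c' + e))) : A) = t := by
      rw [map_add]
      have h1 : pT t = ⟨t, ht⟩ := Submodule.linearProjOfIsCompl_apply_left hcT ⟨t, ht⟩
      have h2 : pT (c + (c' + e)) = 0 :=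
        Submodule.projectionOnto_apply_of_mem_right hcT
          (Submodule.mem_sup.mpr ⟨c, hc, c' + e, Submodule.mem_sup.mpr ⟨c', hc', e, he, rfl⟩, rfl⟩)
      rw [h1, h2, add_zero]
    have hpSa : (pS (t + (c + (c' + e))) : A) = t + c := by
      rw [map_add, map_add]
      have h1 : pS t = ⟨t, hTS ht⟩ := Submodule.linearProjOfIsCompl_apply_left hcS ⟨t, hTS ht⟩
      have h2 : pS c = ⟨c, hCS hc⟩ := Submodule.linearProjOfIsCompl_apply_left hcS ⟨c, hCS hc⟩
      have h3 : pS (c' + e) = 0 :=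
        Submodule.projectionOnto_apply_of_mem_right hcS
          (Submodule.mem_sup.mpr ⟨c', hc', e, he, rfl⟩)
      rw [h1, h2, h3, add_zero]
      rfl
    have hpS'a : (pS' (t + (c + (c' + e))) : A) = t + c' := by
      rw [map_add, map_add]
      have h1 : pS' t = ⟨t, hTS' ht⟩ := Submodule.linearProjOfIsCompl_apply_left hcS' ⟨t, hTS' ht⟩
      have h2 : pS' c = 0 :=
        Submodule.projectionOnto_apply_of_mem_right hcS' (Submodule.mem_sup_left hc)
      have h3 : pS' (c' + e) = ⟨c', hC'S' hc'⟩ + 0 := by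
        rw [map_add]
        have ha : pS' c' = ⟨c', hC'S' hc'⟩ :=
          Submodule.linearProjOfIsCompl_apply_left hcS' ⟨c', hC'S' hc'⟩
        have hb : pS' e = 0 :=
          Submodule.projectionOnto_apply_of_mem_right hcS' (Submodule.mem_sup_right he)
        rw [ha, hb]
      rw [h1, h2, h3]
      show t + (0 + (c' + 0)) = t + c'
      abel
    constructor
    · rw [hpSa, hpTa]
      have h1 : pS' (t + c) = ⟨t, hTS' ht⟩ := by
        rw [map_add]
        have ha : pS' t = ⟨t, hTS' ht⟩ := Submodule.linearProjOfIsCompl_apply_left hcS' ⟨t, hTS' ht⟩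
        have hb : pS' c = 0 :=
          Submodule.projectionOnto_apply_of_mem_right hcS' (Submodule.mem_sup_left hc)
        rw [ha, hb, add_zero]
      rw [h1]
    · rw [hpS'a, hpTa]
      have h1 : pS (t + c') = ⟨t, hTS ht⟩ := by
        rw [map_add]
        have ha : pS t = ⟨t, hTS ht⟩ := Submodule.linearProjOfIsCompl_apply_left hcS ⟨t, hTS ht⟩
        have hb : pS c' = 0 :=
          Submodule.projectionOnto_apply_of_mem_right hcS (Submodule.mem_sup_left hc')
        rw [ha, hb, add_zero]
      rw [h1]
  -- the five equations, as morphisms in ModuleCat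
  have E1 : m ≫ (ModuleCat.ofHom r) = 𝟙 B := by
    apply ModuleCat.hom_ext; apply LinearMap.ext; intro b
    exact hr2 b
  have E1' : m' ≫ (ModuleCat.ofHom r') = 𝟙 B' := by
    apply ModuleCat.hom_ext; apply LinearMap.ext; intro b
    exact hr'2 b
  have E4 : fst ≫ m ≫ (ModuleCat.ofHom wmap) = 𝟙 P := by
    apply ModuleCat.hom_ext; apply LinearMap.ext; intro p
    show wmap (m (fst p)) = p
    rw [← hkap p]
    exact hw2 p
  have E2 : (ModuleCat.ofHom wmap) ≫ snd = (ModuleCat.ofHom r) ≫ m ≫ (ModuleCat.ofHom r') := by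
    apply ModuleCat.hom_ext; apply LinearMap.ext; intro a
    apply hm'
    show m' (snd (wmap a)) = m' (r' (m (r a)))
    have lhs : m' (snd (wmap a)) = (pT a : A) := by
      rw [← hk_eq (wmap a), ← hkap (wmap a)]
      exact hw1 a
    have rhs : m' (r' (m (r a))) = (pS' ((pS a : A)) : A) := by
      rw [hr'1 (m (r a)), hr1 a]
    rw [lhs, rhs, (claim a).1]
  have E3 : (ModuleCat.ofHom wmap) ≫ fst = (ModuleCat.ofHom r') ≫ m' ≫ (ModuleCat.ofHom r) := by
    apply ModuleCat.hom_ext; apply LinearMap.ext; intro a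
    apply hm
    show m (fst (wmap a)) = m (r (m' (r' a)))
    have lhs : m (fst (wmap a)) = (pT a : A) := by
      rw [← hkap (wmap a)]
      exact hw1 a
    have rhs : m (r (m' (r' a))) = (pS ((pS' a : A)) : A) := by
      rw [hr1 (m' (r' a)), hr'1 a]
    rw [lhs, rhs, (claim a).2]
  -- assemble
  refine absPullbackAux (F.map m) (F.map m') (F.map fst) (F.map snd)
    ?_ (F.map (ModuleCat.ofHom r)) (F.map (ModuleCat.ofHom r')) (F.map (ModuleCat.ofHom wmap)) ?_ ?_ ?_ ?_ ?_
  · rw [← F.map_comp, ← F.map_comp, hpb.w]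
  · rw [← F.map_comp, E1, F.map_id]
  · rw [← F.map_comp, E1', F.map_id]
  · rw [← F.map_comp, ← F.map_comp, E4, F.map_id]
  · rw [← F.map_comp, E2, F.map_comp, F.map_comp]
  · rw [← F.map_comp, E3, F.map_comp, F.map_comp]
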